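/- Let N ≥ 1 be an integer and let f(x) = ReLU(cos(πNx)) and g(x) = 1/π + cos(πNx)/2 on [-1,1]. Then for every integer k with |k| ≤ N, ∫_{-1}^{1} (f(x) − g(x)) · e^{−iπkx} dx = 0; that is, g is the L²(-1,1)-orthogonal projection of f onto the span of the trigonometric polynomials e^{iπkx} with |k| ≤ N. -/

import Mathlib

open Real MeasureTheory intervalIntegral Complex

private lemma quasi_pow (c : ℝ → ℂ) (T : ℝ) (ω : ℂ)
    (h : ∀ t, c (t + T) = ω * c t) : ∀ (n : ℕ) (t : ℝ), c (t + n * T) = ω ^ n * c t := by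
  intro n
  induction n with
  | zero => intro t; simp
  | succ n ih =>
    intro t
    have e : t + ((n : ℕ) + 1 : ℕ) * T = (t + n * T) + T := by push_cast; ring
    rw [e, h, ih]; ring

private lemma quasi_int (c : ℝ → ℂ) (hc : Continuous c) (T : ℝ) (ω : ℂ)
    (h : ∀ t, c (t + T) = ω * c t) (a : ℝ) :
    ∀ n : ℕ, ∫ t in a..(a + n * T), c t
      = (∑ j ∈ Finset.range n, ω ^ j) * ∫ t in a..(a + T), c t := by
  intro n
  induction n with
  | zero => simp
  | succ n ih =>
    have h1 : (∫ t in a..(a + n*T), c t) + ∫ t in (a + n*T)..(a + ((n:ℕ)+1:ℕ)*T), c t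
        = ∫ t in a..(a + ((n:ℕ)+1:ℕ)*T), c t :=
      intervalIntegral.integral_add_adjacent_intervals
        (hc.intervalIntegrable _ _) (hc.intervalIntegrable _ _)
    have h2 : (∫ t in (a + n*T)..(a + ((n:ℕ)+1:ℕ)*T), c t) = ω ^ n * ∫ t in a..(a+T), c t := by
      have e1 : a + (((n:ℕ)+1:ℕ):ℝ) * T = (a + T) + (n:ℝ) * T := by push_cast; ring
      have e2 : a + (n:ℝ) * T = a + (n:ℝ) * T := rfl
      rw [e1, ← intervalIntegral.integral_comp_add_right (fun t => c t) ((n:ℝ) * T)]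
      simp_rw [quasi_pow c T ω h n]
      rw [intervalIntegral.integral_const_mul]
    rw [← h1, ih, h2, Finset.sum_range_succ]; ring

private lemma cos_exp_key (s : ℂ) (hs : s = Complex.I ∨ s = -Complex.I) (t : ℝ) :
    Complex.cos ↑t * Complex.exp (s * t) = (Complex.exp ((2*s) * t) + 1)/2 := by
  rw [Complex.cos, div_mul_eq_mul_div, add_mul, ← Complex.exp_add, ← Complex.exp_add]
  rcases hs with hs | hs <;> subst hs
  · rw [show (-↑t*Complex.I + Complex.I*↑t : ℂ) = 0 by ring, Complex.exp_zero,
      show (↑t*Complex.I + Complex.I*↑t : ℂ) = (2*Complex.I)*↑t by ring]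
    try ring
  · rw [show (-↑t*Complex.I + -Complex.I*↑t : ℂ) = (2*(-Complex.I))*↑t by ring,
      show (↑t*Complex.I + -Complex.I*↑t : ℂ) = 0 by ring, Complex.exp_zero]
    try ring

private lemma exp_pi_end (s : ℂ) (hs : s = Complex.I ∨ s = -Complex.I) :
    Complex.exp (s * ((π:ℝ):ℂ)) = -1 := by
  rcases hs with hs | hs <;> subst hs
  · rw [mul_comm, Complex.exp_pi_mul_I]
  · rw [show -Complex.I * ((π:ℝ):ℂ) = -(↑π*Complex.I) by ring, Complex.exp_neg,
      Complex.exp_pi_mul_I]; norm_num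

private lemma exp_negpi_end (s : ℂ) (hs : s = Complex.I ∨ s = -Complex.I) :
    Complex.exp (s * ((-π:ℝ):ℂ)) = -1 := by
  rcases hs with hs | hs <;> subst hs
  · rw [show Complex.I * ((-π:ℝ):ℂ) = -(↑π*Complex.I) by push_cast; ring, Complex.exp_neg,
      Complex.exp_pi_mul_I]; norm_num
  · rw [show -Complex.I * ((-π:ℝ):ℂ) = ↑π*Complex.I by push_cast; ring, Complex.exp_pi_mul_I]

private lemma exp2_halfpi (s : ℂ) (hs : s = Complex.I ∨ s = -Complex.I) :
    Complex.exp ((2*s) * ((π/2:ℝ):ℂ)) = -1 := by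
  rcases hs with hs | hs <;> subst hs
  · rw [show (2*Complex.I) * ((π/2:ℝ):ℂ) = ↑π*Complex.I by push_cast; ring, Complex.exp_pi_mul_I]
  · rw [show (2*(-Complex.I)) * ((π/2:ℝ):ℂ) = -(↑π*Complex.I) by push_cast; ring, Complex.exp_neg,
      Complex.exp_pi_mul_I]; norm_num

private lemma exp2_neghalfpi (s : ℂ) (hs : s = Complex.I ∨ s = -Complex.I) :
    Complex.exp ((2*s) * ((-(π/2):ℝ):ℂ)) = -1 := by
  rcases hs with hs | hs <;> subst hs
  · rw [show (2*Complex.I) * ((-(π/2):ℝ):ℂ) = -(↑π*Complex.I) by push_cast; ring, Complex.exp_neg,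
      Complex.exp_pi_mul_I]; norm_num
  · rw [show (2*(-Complex.I)) * ((-(π/2):ℝ):ℂ) = ↑π*Complex.I by push_cast; ring,
      Complex.exp_pi_mul_I]

private lemma exp2_pi (s : ℂ) (hs : s = Complex.I ∨ s = -Complex.I) :
    Complex.exp ((2*s) * ((π:ℝ):ℂ)) = 1 := by
  rcases hs with hs | hs <;> subst hs
  · rw [show (2*Complex.I) * ((π:ℝ):ℂ) = 2*↑π*Complex.I by push_cast; ring,
      Complex.exp_two_pi_mul_I]
  · rw [show (2*(-Complex.I)) * ((π:ℝ):ℂ) = -(2*↑π*Complex.I) by push_cast; ring, Complex.exp_neg,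
      Complex.exp_two_pi_mul_I]; norm_num

private lemma exp2_negpi (s : ℂ) (hs : s = Complex.I ∨ s = -Complex.I) :
    Complex.exp ((2*s) * ((-π:ℝ):ℂ)) = 1 := by
  rcases hs with hs | hs <;> subst hs
  · rw [show (2*Complex.I) * ((-π:ℝ):ℂ) = -(2*↑π*Complex.I) by push_cast; ring, Complex.exp_neg,
      Complex.exp_two_pi_mul_I]; norm_num
  · rw [show (2*(-Complex.I)) * ((-π:ℝ):ℂ) = 2*↑π*Complex.I by push_cast; ring,
      Complex.exp_two_pi_mul_I]

private lemma contAux (v : ℂ) (h : ℝ → ℝ) (hh : Continuous h) :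
    Continuous fun t : ℝ => ((h t : ℝ) : ℂ) * Complex.exp (v * t) :=
  (Complex.continuous_ofReal.comp hh).mul
    (Complex.continuous_exp.comp (continuous_const.mul Complex.continuous_ofReal))

private lemma max_part (v : ℂ) :
    (∫ t in (-π)..π, ((max (Real.cos t) 0 : ℝ) : ℂ) * Complex.exp (v * t))
      = ∫ t in (-(π/2))..(π/2), Complex.cos ↑t * Complex.exp (v * t) := by
  have hcont := contAux v (fun t => max (Real.cos t) 0) (continuous_cos.max continuous_const)
  have hpi := Real.pi_pos
  have h1 : (∫ t in (-π)..(-(π/2)), ((max (Real.cos t) 0 : ℝ) : ℂ) * Complex.exp (v * t)) = 0 := by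
    rw [intervalIntegral.integral_congr (g := fun _ => (0:ℂ))]
    · simp
    · intro t ht
      rw [Set.uIcc_of_le (by linarith)] at ht
      have hc : Real.cos t ≤ 0 := by
        have := Real.cos_nonpos_of_pi_div_two_le_of_le (x := -t)
          (by linarith [ht.2]) (by linarith [ht.1])
        rwa [Real.cos_neg] at this
      simp [max_eq_right hc]
  have h3 : (∫ t in (π/2)..π, ((max (Real.cos t) 0 : ℝ) : ℂ) * Complex.exp (v * t)) = 0 := by
    rw [intervalIntegral.integral_congr (g := fun _ => (0:ℂ))]
    · simp
    · intro t ht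
      rw [Set.uIcc_of_le (by linarith)] at ht
      have hc : Real.cos t ≤ 0 :=
        Real.cos_nonpos_of_pi_div_two_le_of_le ht.1 (by linarith [ht.2])
      simp [max_eq_right hc]
  have hmid : (∫ t in (-(π/2))..(π/2), ((max (Real.cos t) 0 : ℝ) : ℂ) * Complex.exp (v * t))
      = ∫ t in (-(π/2))..(π/2), Complex.cos ↑t * Complex.exp (v * t) := by
    apply intervalIntegral.integral_congr
    intro t ht
    rw [Set.uIcc_of_le (by linarith)] at ht
    have hc : 0 ≤ Real.cos t := Real.cos_nonneg_of_mem_Icc ht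
    simp [max_eq_left hc, Complex.ofReal_cos]
  rw [← intervalIntegral.integral_add_adjacent_intervals (a := -π) (b := -(π/2)) (c := π)
        (hcont.intervalIntegrable _ _) (hcont.intervalIntegrable _ _),
      ← intervalIntegral.integral_add_adjacent_intervals (a := -(π/2)) (b := π/2) (c := π)
        (hcont.intervalIntegrable _ _) (hcont.intervalIntegrable _ _),
      h1, h3, hmid]
  ring

private lemma period_zero (v : ℂ) (hv : v = 0 ∨ v = Complex.I ∨ v = -Complex.I) :
    (∫ t in (-π)..π,
      ((max (Real.cos t) 0 - 1/π - Real.cos t / 2 : ℝ) : ℂ) * Complex.exp (v * t)) = 0 := by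
  have hpi := Real.pi_pos
  have hsplit : ∀ t : ℝ, ((max (Real.cos t) 0 - 1/π - Real.cos t / 2 : ℝ) : ℂ)
        * Complex.exp (v*t)
      = ((max (Real.cos t) 0 : ℝ):ℂ) * Complex.exp (v*t)
        - ((1/π : ℝ):ℂ) * Complex.exp (v*t)
        - ((Real.cos t / 2 : ℝ):ℂ) * Complex.exp (v*t) := by
    intro t; push_cast; ring
  simp_rw [hsplit]
  rw [intervalIntegral.integral_sub (f := fun t => ((max (Real.cos t) 0 : ℝ):ℂ) * Complex.exp (v*t)
          - ((1/π : ℝ):ℂ) * Complex.exp (v*t))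
        (((contAux v (fun t => max (Real.cos t) 0) (continuous_cos.max continuous_const)).sub
          (contAux v (fun _ => 1/π) continuous_const)).intervalIntegrable _ _)
        ((contAux v (fun t => Real.cos t / 2) (continuous_cos.div_const 2)).intervalIntegrable _ _),
      intervalIntegral.integral_sub
        ((contAux v (fun t => max (Real.cos t) 0) (continuous_cos.max continuous_const)).intervalIntegrable _ _)
        ((contAux v (fun _ => 1/π) continuous_const).intervalIntegrable _ _),
      max_part]
  rcases hv with hv | hv
  · subst hv
    simp only [zero_mul, Complex.exp_zero, mul_one]
    rw [show (fun t : ℝ => Complex.cos ↑t) = (fun t : ℝ => ((Real.cos t : ℝ) : ℂ)) from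
        funext fun t => (Complex.ofReal_cos t).symm]
    rw [intervalIntegral.integral_ofReal, intervalIntegral.integral_ofReal,
        intervalIntegral.integral_ofReal, integral_cos, intervalIntegral.integral_const,
        intervalIntegral.integral_div, integral_cos]
    have hpc : ((π:ℝ):ℂ) ≠ 0 := Complex.ofReal_ne_zero.mpr Real.pi_ne_zero
    simp [Real.sin_pi, Real.sin_neg, Real.sin_pi_div_two, smul_eq_mul]
    field_simp
    try ring
  · have hs0 : v ≠ 0 := by rcases hv with h | h <;> subst h <;> simp [Complex.I_ne_zero]
    have h2s : (2*v : ℂ) ≠ 0 := by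
      rcases hv with h | h <;> subst h <;> simp [Complex.I_ne_zero]
    have hexpcont : Continuous fun t : ℝ => Complex.exp ((2*v) * t) :=
      Complex.continuous_exp.comp (continuous_const.mul Complex.continuous_ofReal)
    have key3 : ∀ t : ℝ, ((Real.cos t / 2 : ℝ):ℂ) * Complex.exp (v*t)
        = (Complex.exp ((2*v) * t) + 1)/4 := by
      intro t
      rw [Complex.ofReal_div, Complex.ofReal_cos, Complex.ofReal_ofNat,
        div_mul_eq_mul_div, cos_exp_key v hv]
      ring
    simp_rw [cos_exp_key v hv, key3]
    rw [intervalIntegral.integral_div, intervalIntegral.integral_div,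
        intervalIntegral.integral_add (hexpcont.intervalIntegrable _ _)
          (intervalIntegrable_const),
        intervalIntegral.integral_add (hexpcont.intervalIntegrable _ _)
          (intervalIntegrable_const),
        intervalIntegral.integral_const_mul,
        integral_exp_mul_complex h2s, integral_exp_mul_complex h2s,
        integral_exp_mul_complex hs0, intervalIntegral.integral_const, intervalIntegral.integral_const,
        exp2_halfpi v hv, exp2_neghalfpi v hv, exp2_pi v hv, exp2_negpi v hv,
        exp_pi_end v hv, exp_negpi_end v hv]
    simp [Complex.real_smul]
    ring

/-- With `f x = ReLU (cos (π N x))` and `g x = 1/π + cos (π N x)/2`, for every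
integer `k` with `|k| ≤ N` the difference `f - g` is L²(-1,1)-orthogonal to `e^{iπkx}`; i.e.,
`g` is the orthogonal projection of `f` onto the trigonometric polynomials of degree ≤ N. -/
theorem relu_cos_low_modes_projection (N : ℕ) (hN : 1 ≤ N) (f g : ℝ → ℝ)
    (hf : ∀ x, f x = max (Real.cos (π * N * x)) 0)
    (hg : ∀ x, g x = 1 / π + Real.cos (π * N * x) / 2) :
    ∀ k : ℤ, |k| ≤ (N : ℤ) →
      (∫ x in (-1 : ℝ)..1,
        ((f x - g x : ℝ) : ℂ) * Complex.exp (-(Complex.I * π * k * x))) = 0 := by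
  intro k hk
  have hpi := Real.pi_pos
  have hNR : ((N:ℕ):ℝ) ≠ 0 := Nat.cast_ne_zero.mpr (by omega)
  have hNC : ((N:ℕ):ℂ) ≠ 0 := Nat.cast_ne_zero.mpr (by omega)
  set v : ℂ := -(Complex.I * k / N) with hv
  set c : ℝ → ℂ := fun t =>
    ((max (Real.cos t) 0 - 1/π - Real.cos t / 2 : ℝ) : ℂ) * Complex.exp (v * t) with hc
  have hcont : Continuous c :=
    contAux v (fun t => max (Real.cos t) 0 - 1/π - Real.cos t / 2)
      (((continuous_cos.max continuous_const).sub continuous_const).sub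
        (continuous_cos.div_const 2))
  have hint : ∀ x : ℝ, ((f x - g x : ℝ) : ℂ) * Complex.exp (-(Complex.I * ↑π * ↑k * ↑x))
      = c (π * ↑N * x) := by
    intro x
    rw [hf, hg, hc]
    have h1 : (max (Real.cos (π * ↑N * x)) 0 - (1/π + Real.cos (π * ↑N * x)/2) : ℝ)
        = max (Real.cos (π * ↑N * x)) 0 - 1/π - Real.cos (π * ↑N * x)/2 := by ring
    have h2 : -(Complex.I * ↑π * ↑k * ↑x) = v * ↑(π * ↑N * x) := by
      rw [hv]; push_cast; field_simp
    rw [h1, h2]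
  simp_rw [hint]
  rw [intervalIntegral.integral_comp_mul_left c (mul_ne_zero Real.pi_ne_zero hNR)]
  have hper : ∀ t : ℝ, c (t + 2*π) = Complex.exp (v * ((2*π : ℝ):ℂ)) * c t := by
    intro t
    simp only [hc, Real.cos_add_two_pi]
    rw [Complex.ofReal_add, mul_add, Complex.exp_add]
    push_cast
    ring
  have hb1 : (π*((N:ℕ):ℝ))*(-1) = -(π*((N:ℕ):ℝ)) := by ring
  have hb2 : (π*((N:ℕ):ℝ))*1 = -(π*((N:ℕ):ℝ)) + (N:ℕ)*(2*π) := by ring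
  rw [hb1, hb2, quasi_int c hcont (2*π) (Complex.exp (v * ((2*π : ℝ):ℂ))) hper
    (-(π*((N:ℕ):ℝ))) N]
  have hz : (∑ j ∈ Finset.range N, Complex.exp (v * ((2*π:ℝ):ℂ)) ^ j)
      * (∫ t in (-(π*((N:ℕ):ℝ)))..(-(π*((N:ℕ):ℝ)) + 2*π), c t) = 0 := by
    by_cases hdvd : (N:ℤ) ∣ k
    · apply mul_eq_zero_of_right
      obtain ⟨m, hm⟩ := hdvd
      have hm1 : m = -1 ∨ m = 0 ∨ m = 1 := by
        have hNk : (N:ℤ) * |m| ≤ (N:ℤ) * 1 := by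
          rw [mul_one]
          rwa [hm, abs_mul, abs_of_nonneg (by positivity : (0:ℤ) ≤ (N:ℤ))] at hk
        have h1 : |m| ≤ 1 := le_of_mul_le_mul_left hNk (by exact_mod_cast hN)
        have := abs_le.mp h1
        omega
      have hveq : v = -((m:ℂ) * Complex.I) := by
        rw [hv, hm]
        push_cast
        field_simp
      have hv3 : v = 0 ∨ v = Complex.I ∨ v = -Complex.I := by
        rcases hm1 with h | h | h <;> subst h <;> rw [hveq] <;> norm_num
      have hω1 : Complex.exp (v * ((2*π:ℝ):ℂ)) = 1 := by
        rcases hv3 with h | h | h <;> rw [h]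
        · simp
        · rw [show Complex.I * ((2*π:ℝ):ℂ) = 2*↑π*Complex.I by push_cast; ring,
            Complex.exp_two_pi_mul_I]
        · rw [show -Complex.I * ((2*π:ℝ):ℂ) = -(2*↑π*Complex.I) by push_cast; ring,
            Complex.exp_neg, Complex.exp_two_pi_mul_I]
          norm_num
      have hperiodic : Function.Periodic c (2*π) := fun t => by
        rw [hper t, hω1, one_mul]
      rw [hperiodic.intervalIntegral_add_eq (-(π*((N:ℕ):ℝ))) (-π),
        show -π + 2*π = π by ring]
      exact period_zero v hv3
    · apply mul_eq_zero_of_left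
      have hω : Complex.exp (v * ((2*π:ℝ):ℂ)) ≠ 1 := by
        intro h1
        rw [Complex.exp_eq_one_iff] at h1
        obtain ⟨n, hn⟩ := h1
        rw [hv] at hn
        apply hdvd
        have hIpi : (2*(π:ℂ)*Complex.I) ≠ 0 := by
          simp [Complex.I_ne_zero, Complex.ofReal_ne_zero.mpr Real.pi_ne_zero]
        have hc2 : ((k:ℤ):ℂ) * (2*(π:ℂ)*Complex.I) = ((-n*(N:ℕ) : ℤ):ℂ) * (2*(π:ℂ)*Complex.I) := by
          push_cast
          field_simp at hn
          push_cast at hn; linear_combination -Complex.I * hn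
        have hkk : k = -n*(N:ℕ) := by exact_mod_cast mul_right_cancel₀ hIpi hc2
        exact ⟨-n, by rw [hkk]; ring⟩
      have hωN : (Complex.exp (v*((2*π:ℝ):ℂ)))^N = 1 := by
        rw [← Complex.exp_nat_mul]
        rw [show ((N:ℕ):ℂ) * (v * ((2*π:ℝ):ℂ)) = ((-k : ℤ):ℂ) * (2*↑π*Complex.I) by
          rw [hv]; push_cast; field_simp]
        rw [Complex.exp_int_mul_two_pi_mul_I]
      rw [geom_sum_eq hω, hωN]
      simp
  rw [hz, smul_zero]
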